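/- Let Ω be a nonempty open subset of ℝ^{n+1} (n ≥ 1) with nonempty topological boundary ∂Ω, let u(y) = dist(y, ∂Ω), and let s > 0. Then Γ_s^+ = ⋃_{t>s} Γ_s^t can be covered by countably many C^{1,1}-images of ℝⁿ into ℝ^{n+1}: there exists a sequence of maps f_j : ℝⁿ → ℝ^{n+1}, each differentiable with Lipschitz-continuous derivative, such that Γ_s^+ ⊆ ⋃_{j∈ℕ} f_j(ℝⁿ). -/

import Mathlib

open RealInnerProductSpace Metric Set Filter Topology

namespace C11

variable {E : Type*} [NormedAddCommGroup E] [InnerProductSpace ℝ E]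

lemma improve (φ : E → ℝ) (y₀ : E) (c₀ κ : ℝ)
    (h1 : ∀ y, φ y ≤ c₀ * ‖y - y₀‖^2)
    (h2 : ∀ y, φ y ≤ 2 * φ ((1/2 : ℝ) • (y₀ + y)) + (κ/2) * ‖y - y₀‖^2) :
    ∀ y, φ y ≤ κ * ‖y - y₀‖^2 := by
  have key : ∀ j : ℕ, ∀ y, φ y ≤ (κ + (c₀ - κ) * (1/2)^j) * ‖y - y₀‖^2 := by
    intro j
    induction j with
    | zero => intro y; simpa using h1 y
    | succ j ih =>
      intro y
      have hm := ih ((1/2 : ℝ) • (y₀ + y))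
      have hveq : (1/2 : ℝ) • (y₀ + y) - y₀ = (1/2 : ℝ) • (y - y₀) := by module
      have hd : ‖(1/2 : ℝ) • (y₀ + y) - y₀‖^2 = (1/4) * ‖y - y₀‖^2 := by
        rw [hveq, norm_smul, Real.norm_eq_abs, mul_pow,
          abs_of_nonneg (by norm_num : (0:ℝ) ≤ 1/2)]
        ring
      rw [hd] at hm
      calc φ y ≤ 2 * φ ((1/2 : ℝ) • (y₀ + y)) + (κ/2) * ‖y - y₀‖^2 := h2 y
        _ ≤ 2 * ((κ + (c₀ - κ) * (1/2)^j) * (1/4 * ‖y - y₀‖^2)) + (κ/2) * ‖y - y₀‖^2 := by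
            linarith [hm]
        _ = (κ + (c₀ - κ) * (1/2)^(j+1)) * ‖y - y₀‖^2 := by ring
  intro y
  have ht : Tendsto (fun j : ℕ => (κ + (c₀ - κ) * (1/2)^j) * ‖y - y₀‖^2) atTop
      (𝓝 (κ * ‖y - y₀‖^2)) := by
    have h0 : Tendsto (fun j : ℕ => ((1:ℝ)/2)^j) atTop (𝓝 0) := by
      apply tendsto_pow_atTop_nhds_zero_of_lt_one <;> norm_num
    have := ((h0.const_mul (c₀ - κ)).const_add κ).mul_const (‖y - y₀‖^2)
    simpa using this
  exact ge_of_tendsto ht (Eventually.of_forall fun j => key j y)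

/-- A function with global two-sided tangent paraboloids at every point is
differentiable with Lipschitz derivative. -/
lemma deriv_of_parab (w : E → ℝ) (P : E → E) (Λ : ℝ) (hΛ : 0 ≤ Λ)
    (h : ∀ x z, |w z - w x - ⟪P x, z - x⟫| ≤ Λ * ‖z - x‖^2) :
    (∀ x, HasFDerivAt w ((InnerProductSpace.toDualMap ℝ E) (P x) : E →L[ℝ] ℝ) x) ∧
    (∀ x y, ‖P x - P y‖ ≤ 6 * Λ * ‖x - y‖) := by
  constructor
  · intro x
    rw [hasFDerivAt_iff_isLittleO_nhds_zero]
    rw [Asymptotics.isLittleO_iff]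
    intro c hc
    have hev : ∀ᶠ (z : E) in 𝓝 0, ‖z‖ ≤ c / (Λ + 1) := by
      have : Metric.closedBall (0:E) (c/(Λ+1)) ∈ 𝓝 (0:E) := by
        apply Metric.closedBall_mem_nhds
        positivity
      filter_upwards [this] with z hz
      simpa using hz
    filter_upwards [hev] with z hz
    have h2 := h x (x + z)
    simp only [add_sub_cancel_left] at h2
    have hb : Λ * ‖z‖^2 ≤ c * ‖z‖ := by
      have h3 : Λ * ‖z‖ ≤ (Λ + 1) * (c / (Λ + 1)) := by
        have := mul_le_mul_of_nonneg_left hz (le_of_lt (by positivity : (0:ℝ) < Λ + 1))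
        nlinarith [norm_nonneg z]
      have h4 : (Λ + 1) * (c / (Λ + 1)) = c := by field_simp
      nlinarith [norm_nonneg z]
    calc ‖w (x + z) - w x - (InnerProductSpace.toDualMap ℝ E) (P x) z‖
        = |w (x + z) - w x - ⟪P x, z⟫| := by
          rw [InnerProductSpace.toDualMap_apply_apply, Real.norm_eq_abs]
      _ ≤ Λ * ‖z‖^2 := h2
      _ ≤ c * ‖z‖ := hb
  · intro x y
    rcases eq_or_ne x y with rfl | hxy
    · simp
    rcases eq_or_ne (P x) (P y) with hP | hP
    · rw [hP]; simp; positivity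
    set t := ‖x - y‖ with ht
    have htpos : 0 < t := by
      rw [ht, norm_pos_iff]; exact sub_ne_zero.2 hxy
    set d := P x - P y with hd
    have hdpos : 0 < ‖d‖ := by
      rw [hd, norm_pos_iff]; exact sub_ne_zero.2 hP
    set z := y - (t / ‖d‖) • d with hz
    have hzy : z - y = -((t / ‖d‖) • d) := by rw [hz]; abel
    have hnzy : ‖z - y‖ = t := by
      rw [hzy, norm_neg, norm_smul]
      rw [Real.norm_eq_abs, abs_div, abs_of_pos htpos, abs_of_pos hdpos]
      field_simp
    have hinner : ⟪d, z - y⟫ = -(t * ‖d‖) := by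
      rw [hzy, inner_neg_right, real_inner_smul_right, real_inner_self_eq_norm_sq]
      field_simp
    have hyx : ‖y - x‖ = t := norm_sub_rev y x
    have hzx : ‖z - x‖ ≤ 2 * t := by
      calc ‖z - x‖ ≤ ‖z - y‖ + ‖y - x‖ := by
            have h5 : z - x = (z - y) + (y - x) := by abel
            rw [h5]; exact norm_add_le _ _
        _ = t + t := by rw [hnzy, hyx]
        _ = 2 * t := by ring
    have e1 := abs_le.1 (h x z)
    have e2 := abs_le.1 (h y z)
    have e3 := abs_le.1 (h x y)
    have hsplit : ⟪P x, z - x⟫ = ⟪P x, z - y⟫ + ⟪P x, y - x⟫ := by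
      rw [← inner_add_right]
      congr 1
      abel
    have key : ⟪P x - P y, z - y⟫ ≥ -(Λ * ‖z - x‖^2 + Λ * ‖z - y‖^2 + Λ * ‖y - x‖^2) := by
      have hsub : ⟪P x - P y, z - y⟫ = ⟪P x, z - y⟫ - ⟪P y, z - y⟫ := by
        rw [inner_sub_left]
      linarith [e1.1, e1.2, e2.1, e2.2, e3.1, e3.2, hsplit.ge, hsplit.le, hsub.ge, hsub.le]
    rw [← hd, hinner, hnzy, hyx] at key
    have hzx2 : ‖z - x‖^2 ≤ 4 * t^2 := by nlinarith [norm_nonneg (z - x)]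
    have h7 : t * ‖d‖ ≤ 6 * Λ * t^2 := by nlinarith [mul_nonneg hΛ (sq_nonneg t)]
    have h8 : t * ‖d‖ ≤ t * (6 * Λ * t) := by nlinarith
    have h9 : ‖d‖ ≤ 6 * Λ * t := le_of_mul_le_mul_left h8 htpos
    exact h9

variable {E : Type*} [NormedAddCommGroup E] [InnerProductSpace ℝ E]

lemma norm_sq_le_two' (a b : E) : ‖a‖^2 ≤ 2*‖a-b‖^2 + 2*‖b‖^2 := by
  have h := norm_add_le (a - b) b
  have h2 : a - b + b = a := by abel
  rw [h2] at h
  have h3 := mul_self_le_mul_self (norm_nonneg a) h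
  nlinarith [sq_nonneg (‖a-b‖ - ‖b‖)]

/-- the vector inequality for the upper paraboloid transfer -/
lemma vec_upper (C : ℝ) (hC : 0 < C) (a b c : E) :
    4*C*⟪c, b - a⟫ + (2*C/3)*‖a‖^2 - 2*C*‖c + b - a‖^2 + 2*C*‖c‖^2 - 2*C*‖b‖^2 ≤ 0 := by
  have h1 : ‖c + b - a‖^2 = ‖c‖^2 + 2*⟪c, b-a⟫ + ‖b-a‖^2 := by
    rw [show c + b - a = c + (b - a) by abel, norm_add_sq_real]
  have h2 := norm_sq_le_two' a b
  have h3 : ‖b - a‖ = ‖a - b‖ := norm_sub_rev _ _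
  rw [h1, h3]
  nlinarith [mul_le_mul_of_nonneg_left h2 hC.le]

/-- preservation, upper bound inequality -/
lemma pres_ub (C : ℝ) (hC : 0 < C) (qq bb : E) :
    ⟪(6*C)•qq, (2/3:ℝ)•bb - qq⟫ + C*‖(2/3:ℝ)•bb - qq‖^2
      + 2*C*‖(1/3:ℝ)•bb + qq‖^2 - 2*C*‖bb‖^2 ≤ 0 := by
  have e1 : ⟪(6*C)•qq, (2/3:ℝ)•bb - qq⟫
      = 6*C*((2/3)*⟪qq, bb⟫) - 6*C*⟪qq, qq⟫ := by
    simp only [inner_sub_right, real_inner_smul_left, real_inner_smul_right]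
    ring
  have e2 : ‖(2/3:ℝ)•bb - qq‖^2
      = (4/9)*‖bb‖^2 - (4/3)*⟪qq, bb⟫ + ⟪qq, qq⟫ := by
    rw [norm_sub_sq_real, norm_smul, real_inner_smul_left, real_inner_self_eq_norm_sq,
      real_inner_comm]
    rw [Real.norm_eq_abs, abs_of_nonneg (by norm_num : (0:ℝ) ≤ 2/3)]
    ring
  have e3 : ‖(1/3:ℝ)•bb + qq‖^2
      = (1/9)*‖bb‖^2 + (2/3)*⟪qq, bb⟫ + ⟪qq, qq⟫ := by
    rw [norm_add_sq_real, norm_smul, real_inner_smul_left, real_inner_self_eq_norm_sq,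
      real_inner_comm]
    rw [Real.norm_eq_abs, abs_of_nonneg (by norm_num : (0:ℝ) ≤ 1/3)]
    ring
  rw [e1, e2, e3]
  have h4 : ⟪qq, bb⟫ ≤ ‖qq‖*‖bb‖ := real_inner_le_norm _ _
  have h5 : ⟪qq, qq⟫ = ‖qq‖^2 := real_inner_self_eq_norm_sq _
  have h6 : 4*(‖qq‖*‖bb‖) ≤ 3*‖qq‖^2 + (4/3)*‖bb‖^2 := by
    nlinarith [sq_nonneg (3*‖qq‖ - 2*‖bb‖)]
  nlinarith [mul_le_mul_of_nonneg_left h4 (by linarith : (0:ℝ) ≤ 4*C),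
    mul_le_mul_of_nonneg_left h6 hC.le]

/-- preservation, lower bound inequality -/
lemma pres_lb (C : ℝ) (hC : 0 < C) (qq uu : E) :
    0 ≤ ⟪(4*C)•qq, uu⟫ - C*‖uu‖^2 + 2*C*‖qq - uu‖^2 - 2*C*‖qq‖^2 := by
  have e1 : ⟪(4*C)•qq, uu⟫ = 4*C*⟪qq, uu⟫ := real_inner_smul_left _ _ _
  have e2 : ‖qq - uu‖^2 = ‖qq‖^2 - 2*⟪qq,uu⟫ + ‖uu‖^2 := norm_sub_sq_real _ _
  rw [e1, e2]
  nlinarith [mul_le_mul_of_nonneg_left (sq_nonneg ‖uu‖) hC.le, mul_nonneg hC.le (sq_nonneg ‖uu‖)]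

lemma par_mid (a b : E) :
    ‖(1/2:ℝ)•(a+b)‖^2 = (1/2)*‖a‖^2 + (1/2)*‖b‖^2 - (1/4)*‖a-b‖^2 := by
  have h := parallelogram_law_with_norm ℝ a b
  have h2 : ‖(1/2:ℝ)•(a+b)‖^2 = (1/4)*‖a+b‖^2 := by
    rw [norm_smul, Real.norm_eq_abs, abs_of_nonneg (by norm_num : (0:ℝ) ≤ 1/2)]
    ring
  rw [h2]
  simp only [pow_two]
  linarith



/-- real quadratic domination inequality -/
lemma quad_dom (K L a h : ℝ) (hK : 0 ≤ K) (hL : 0 ≤ L) (ha : 0 ≤ a) (hh : 0 ≤ h) :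
    K*a^2 + L*(a*h) ≤ (5*K+2*L+1)*h^2 + (5*K+2*L+1)*(h-a)^2 := by
  nlinarith [sq_nonneg (h-a), sq_nonneg (2*h-a), sq_nonneg a, sq_nonneg h,
    mul_nonneg hK (sq_nonneg (2*h-a)), mul_nonneg hL (sq_nonneg (2*h-a)),
    mul_nonneg hK (sq_nonneg (h-a)), mul_nonneg hL (sq_nonneg (h-a)),
    mul_nonneg hK (sq_nonneg h), mul_nonneg hL (sq_nonneg h),
    mul_nonneg hK (sq_nonneg a), mul_nonneg hL (sq_nonneg a),
    mul_nonneg (mul_nonneg hL ha) hh, mul_nonneg (mul_nonneg hK ha) hh]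

lemma norm_sq_le_two (a b : E) : ‖a‖^2 ≤ 2*‖a-b‖^2 + 2*‖b‖^2 := by
  have h := norm_add_le (a - b) b
  have h2 : a - b + b = a := by abel
  rw [h2] at h
  have h3 := mul_self_le_mul_self (norm_nonneg a) h
  nlinarith [sq_nonneg (‖a-b‖ - ‖b‖)]

lemma norm_sq_ge_third (a b : E) : (2/3)*‖a‖^2 - 2*‖b‖^2 ≤ ‖a - b‖^2 := by
  have h := norm_add_le (a - b) b
  have h2 : a - b + b = a := by abel
  rw [h2] at h
  have h3 := mul_self_le_mul_self (norm_nonneg a) h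
  nlinarith [sq_nonneg (‖a-b‖ - 2*‖b‖)]

lemma amgm_aux (Cc N r : ℝ) (hC : 0 < Cc) : N*r ≤ Cc/3*r^2 + 3/(4*Cc)*N^2 := by
  rw [← sub_nonneg]
  have h : Cc/3*r^2 + 3/(4*Cc)*N^2 - N*r = (Cc*r - (3/2)*N)^2/(3*Cc) := by
    field_simp
    ring
  rw [h]
  positivity

set_option maxHeartbeats 2000000 in
theorem exists_c11_ext [FiniteDimensional ℝ E] (D : Set E) (hD : D.Nonempty)
    (f : E → ℝ) (p : E → E) (K L : ℝ) (hK : 0 ≤ K) (hL : 0 ≤ L)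
    (hf : ∀ x ∈ D, ∀ z ∈ D, |f z - f x - ⟪p x, z - x⟫| ≤ K * ‖z - x‖^2)
    (hp : ∀ x ∈ D, ∀ z ∈ D, ‖p x - p z‖ ≤ L * ‖x - z‖) :
    ∃ (w : E → ℝ) (P : E → E) (Λ : ℝ), 0 ≤ Λ ∧ (∀ x ∈ D, w x = f x) ∧
      ∀ x z, |w z - w x - ⟪P x, z - x⟫| ≤ Λ * ‖z - x‖^2 := by
  obtain ⟨x₀, hx₀⟩ := hD
  haveI : Nonempty E := ⟨x₀⟩
  obtain ⟨Cc, hCcdef⟩ : ∃ Cc : ℝ, Cc = 5*K + 2*L + 1 := ⟨_, rfl⟩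
  have hC : 0 < Cc := by rw [hCcdef]; linarith
  obtain ⟨N, hNdef⟩ : ∃ N : ℝ, N = ‖p x₀‖ := ⟨_, rfl⟩
  have hN : 0 ≤ N := hNdef ▸ norm_nonneg _
  -- domination
  have hdom : ∀ x₁ ∈ D, ∀ z ∈ D, ∀ y : E,
      f x₁ + ⟪p x₁, y - x₁⟫ - Cc * ‖y - x₁‖^2 ≤ f z + ⟪p z, y - z⟫ + Cc * ‖y - z‖^2 := by
    intro x₁ hx₁ z hz y
    have h1 := abs_le.1 (hf x₁ hx₁ z hz)
    have h2 : -(L * ‖z - x₁‖ * ‖y - z‖) ≤ ⟪p z - p x₁, y - z⟫ := by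
      have ha : |⟪p z - p x₁, y - z⟫| ≤ ‖p z - p x₁‖ * ‖y - z‖ := abs_real_inner_le_norm _ _
      have hb : ‖p z - p x₁‖ * ‖y - z‖ ≤ L * ‖z - x₁‖ * ‖y - z‖ :=
        mul_le_mul_of_nonneg_right (hp z hz x₁ hx₁) (norm_nonneg _)
      have := (abs_le.1 ha).1
      linarith
    have hsplit : ⟪p x₁, y - x₁⟫ = ⟪p x₁, y - z⟫ + ⟪p x₁, z - x₁⟫ := by
      rw [← inner_add_right]; congr 1; abel
    have htri : |‖y - z‖ - ‖z - x₁‖| ≤ ‖y - x₁‖ := by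
      have h := abs_norm_sub_norm_le (y - z) (x₁ - z)
      rw [show (y - z) - (x₁ - z) = y - x₁ by abel, norm_sub_rev x₁ z] at h
      exact h
    have h3 : (‖y - z‖ - ‖z - x₁‖)^2 ≤ ‖y - x₁‖^2 :=
      sq_le_sq' (neg_le_of_abs_le htri) (le_of_abs_le htri)
    have h3' := mul_le_mul_of_nonneg_left h3 hC.le
    have hq := quad_dom K L (‖z - x₁‖) (‖y - z‖) hK hL (norm_nonneg _) (norm_nonneg _)
    rw [← hCcdef] at hq
    have hinner2 : ⟪p z, y - z⟫ - ⟪p x₁, y - z⟫ = ⟪p z - p x₁, y - z⟫ :=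
      (inner_sub_left _ _ _).symm
    linarith [h1.1, h2, hq, h3', hsplit.le, hsplit.ge, hinner2.le, hinner2.ge]
  -- the lower envelope m
  set mm : E → ℝ := fun x => sInf ((fun z => f z + ⟪p z, x - z⟫ + Cc * ‖x - z‖^2) '' D)
    with hmmdef
  have him : ∀ x : E, ((fun z => f z + ⟪p z, x - z⟫ + Cc * ‖x - z‖^2) '' D).Nonempty :=
    fun _ => (Set.nonempty_of_mem hx₀).image _
  have hbddm : ∀ x : E, BddBelow ((fun z => f z + ⟪p z, x - z⟫ + Cc * ‖x - z‖^2) '' D) := by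
    intro x
    refine ⟨f x₀ + ⟪p x₀, x - x₀⟫ - Cc*‖x-x₀‖^2, ?_⟩
    rintro v ⟨z, hz, rfl⟩
    exact hdom x₀ hx₀ z hz x
  have m_le : ∀ x : E, ∀ z ∈ D, mm x ≤ f z + ⟪p z, x - z⟫ + Cc * ‖x - z‖^2 :=
    fun x z hz => csInf_le (hbddm x) (Set.mem_image_of_mem _ hz)
  have m_ge : ∀ x : E, ∀ x₁ ∈ D, f x₁ + ⟪p x₁, x - x₁⟫ - Cc*‖x-x₁‖^2 ≤ mm x := by
    intro x x₁ hx₁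
    apply le_csInf (him x)
    rintro v ⟨z, hz, rfl⟩
    exact hdom x₁ hx₁ z hz x
  have m_eq : ∀ x₁ ∈ D, mm x₁ = f x₁ := by
    intro x₁ hx₁
    have h1 := m_le x₁ x₁ hx₁
    have h2 := m_ge x₁ x₁ hx₁
    simp only [sub_self, inner_zero_right, norm_zero] at h1 h2
    have hz0 : (0:ℝ)^2 = 0 := by norm_num
    rw [hz0] at h1 h2
    linarith
  -- midpoint semiconcavity of m
  have m_mid : ∀ x₁ x₂ : E, (mm x₁)/2 + (mm x₂)/2 - (Cc/4)*‖x₁-x₂‖^2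
      ≤ mm ((1/2:ℝ)•(x₁+x₂)) := by
    intro x₁ x₂
    apply le_csInf (him _)
    rintro v ⟨z, hz, rfl⟩
    dsimp only
    have hms : (1/2:ℝ)•(x₁+x₂) - z = (1/2:ℝ)•((x₁ - z) + (x₂ - z)) := by module
    have e1 : ⟪p z, (1/2:ℝ)•(x₁+x₂) - z⟫
        = (1/2)*⟪p z, x₁ - z⟫ + (1/2)*⟪p z, x₂ - z⟫ := by
      rw [hms, real_inner_smul_right, inner_add_right]; ring
    have e2 : ‖(1/2:ℝ)•(x₁+x₂) - z‖^2
        = (1/2)*‖x₁-z‖^2 + (1/2)*‖x₂-z‖^2 - (1/4)*‖x₁-x₂‖^2 := by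
      rw [hms, par_mid, show (x₁ - z) - (x₂ - z) = x₁ - x₂ by abel]
    have e2' : Cc * ‖(1/2:ℝ)•(x₁+x₂) - z‖^2
        = (1/2)*(Cc*‖x₁-z‖^2) + (1/2)*(Cc*‖x₂-z‖^2) - (1/4)*(Cc*‖x₁-x₂‖^2) := by
      rw [e2]; ring
    rw [e1]
    linarith [m_le x₁ z hz, m_le x₂ z hz, e2'.le, e2'.ge]
  -- the inf-convolution g
  set gg : E → ℝ := fun x => sInf (Set.range (fun z => mm z + 2*Cc*‖x - z‖^2)) with hggdef
  have gterm_ge : ∀ x z : E, f x₀ - (3/(4*Cc))*N^2 - 4*Cc*‖x-x₀‖^2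
      ≤ mm z + 2*Cc*‖x - z‖^2 := by
    intro x z
    have h1 := m_ge z x₀ hx₀
    have h2 : -(N * ‖z - x₀‖) ≤ ⟪p x₀, z - x₀⟫ := by
      have h := (abs_le.1 (abs_real_inner_le_norm (p x₀) (z - x₀))).1
      rw [← hNdef] at h
      linarith
    have h3 : (2/3)*‖z - x₀‖^2 - 2*‖x - x₀‖^2 ≤ ‖x - z‖^2 := by
      have h := norm_sq_ge_third (z - x₀) (x - x₀)
      rw [show (z - x₀) - (x - x₀) = z - x by abel, norm_sub_rev z x] at h
      exact h
    have h3' := mul_le_mul_of_nonneg_left h3 (by linarith : (0:ℝ) ≤ 2*Cc)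
    have hamgm := amgm_aux Cc N ‖z - x₀‖ hC
    linarith [h1, h2, h3', hamgm]
  have g_bdd : ∀ x : E, BddBelow (Set.range (fun z => mm z + 2*Cc*‖x - z‖^2)) := by
    intro x
    refine ⟨f x₀ - (3/(4*Cc))*N^2 - 4*Cc*‖x-x₀‖^2, ?_⟩
    rintro v ⟨z, rfl⟩
    exact gterm_ge x z
  have g_le : ∀ x z : E, gg x ≤ mm z + 2*Cc*‖x - z‖^2 :=
    fun x z => csInf_le (g_bdd x) ⟨z, rfl⟩
  have g_le' : ∀ x : E, gg x ≤ mm x := by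
    intro x
    have h := g_le x x
    simp only [sub_self, norm_zero] at h
    calc gg x ≤ mm x + 2*Cc*(0:ℝ)^2 := h
      _ = mm x := by ring
  -- midpoint semiconcavity of g with constant 2Cc/3
  have g_mid : ∀ x₁ x₂ : E, gg x₁/2 + gg x₂/2 - (Cc/6)*‖x₁-x₂‖^2
      ≤ gg ((1/2:ℝ)•(x₁+x₂)) := by
    intro x₁ x₂
    apply le_csInf (Set.range_nonempty _)
    rintro v ⟨z, rfl⟩
    dsimp only
    set xm := (1/2:ℝ)•(x₁+x₂) with hxm
    set a := x₁ - xm with hadef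
    set z₁ := z + (2/3:ℝ)•a with hz₁
    set z₂ := z - (2/3:ℝ)•a with hz₂
    have hmidz : (1/2:ℝ)•(z₁ + z₂) = z := by rw [hz₁, hz₂]; module
    have hmm2 := m_mid z₁ z₂
    rw [hmidz] at hmm2
    have hz12 : ‖z₁ - z₂‖^2 = (16/9)*‖a‖^2 := by
      rw [show z₁ - z₂ = (4/3:ℝ)•a by rw [hz₁, hz₂]; module, norm_smul, Real.norm_eq_abs,
        abs_of_nonneg (by norm_num : (0:ℝ) ≤ 4/3)]
      ring
    rw [hz12] at hmm2
    have hd2 : ‖x₁ - x₂‖^2 = 4*‖a‖^2 := by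
      rw [show x₁ - x₂ = (2:ℝ)•a by rw [hadef, hxm]; module, norm_smul, Real.norm_eq_abs,
        abs_of_nonneg (by norm_num : (0:ℝ) ≤ 2)]
      ring
    have hxz1 : x₁ - z₁ = xm - z + (1/3:ℝ)•a := by rw [hz₁, hadef]; module
    have hxz2 : x₂ - z₂ = xm - z - (1/3:ℝ)•a := by
      rw [hz₂, hadef, hxm]; module
    have hplg : ‖x₁ - z₁‖^2 + ‖x₂ - z₂‖^2 = 2*‖xm - z‖^2 + (2/9)*‖a‖^2 := by
      rw [hxz1, hxz2]
      have h := parallelogram_law_with_norm ℝ (xm - z) ((1/3:ℝ)•a)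
      have hsm : ‖(1/3:ℝ)•a‖^2 = (1/9)*‖a‖^2 := by
        rw [norm_smul, Real.norm_eq_abs, abs_of_nonneg (by norm_num : (0:ℝ) ≤ 1/3)]
        ring
      simp only [pow_two] at *
      nlinarith [h, hsm]
    have hplg' : 2*Cc*‖xm - z‖^2
        = Cc*‖x₁ - z₁‖^2 + Cc*‖x₂ - z₂‖^2 - (2*Cc/9)*‖a‖^2 := by
      rw [show Cc*‖x₁ - z₁‖^2 + Cc*‖x₂ - z₂‖^2 = Cc*(‖x₁ - z₁‖^2 + ‖x₂ - z₂‖^2) by ring,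
        hplg]
      ring
    have hg1 := g_le x₁ z₁
    have hg2 := g_le x₂ z₂
    rw [hd2]
    linarith [hg1, hg2, hmm2, hplg'.le, hplg'.ge]
  -- upper semicontinuity of g
  have g_usc : ∀ y₀ : E, ∀ ε > (0:ℝ), ∀ᶠ y in 𝓝 y₀, gg y < gg y₀ + ε := by
    intro y₀ ε hε
    have hlt : gg y₀ < gg y₀ + ε/2 := by linarith
    obtain ⟨v, ⟨z, rfl⟩, hv⟩ := exists_lt_of_csInf_lt (Set.range_nonempty _) hlt
    dsimp only at hv
    have hcont : Continuous fun y : E => mm z + 2*Cc*‖y - z‖^2 := by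
      apply Continuous.add continuous_const
      apply Continuous.mul continuous_const
      exact (continuous_norm.comp (continuous_id.sub continuous_const)).pow 2
    have hev := (hcont.tendsto y₀).eventually_lt_const
      (show mm z + 2*Cc*‖y₀ - z‖^2 < gg y₀ + ε by linarith)
    filter_upwards [hev] with y hy
    exact lt_of_le_of_lt (g_le y z) hy
  -- the sup-convolution w
  have wterm_le' : ∀ x y : E, gg y - 2*Cc*‖x - y‖^2
      ≤ f x₀ + N*‖y - x₀‖ - (Cc/3)*‖y-x₀‖^2 + 4*Cc*‖x-x₀‖^2 := by
    intro x y
    have h1 : mm y ≤ f x₀ + ⟪p x₀, y - x₀⟫ + Cc * ‖y - x₀‖^2 := m_le y x₀ hx₀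
    have h2 : ⟪p x₀, y - x₀⟫ ≤ N * ‖y - x₀‖ := by
      have h := real_inner_le_norm (p x₀) (y - x₀)
      rw [← hNdef] at h
      exact h
    have h3 : (2/3)*‖y - x₀‖^2 - 2*‖x - x₀‖^2 ≤ ‖x - y‖^2 := by
      have h := norm_sq_ge_third (y - x₀) (x - x₀)
      rw [show (y - x₀) - (x - x₀) = y - x by abel, norm_sub_rev y x] at h
      exact h
    have h3' := mul_le_mul_of_nonneg_left h3 (by linarith : (0:ℝ) ≤ 2*Cc)
    have h4 := g_le' y
    linarith [h1, h2, h3', h4]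
  have wterm_le : ∀ x y : E, gg y - 2*Cc*‖x - y‖^2
      ≤ f x₀ + (3/(4*Cc))*N^2 + 4*Cc*‖x-x₀‖^2 := by
    intro x y
    have h := wterm_le' x y
    have hamgm := amgm_aux Cc N ‖y - x₀‖ hC
    linarith
  set ww : E → ℝ := fun x => sSup (Set.range (fun y => gg y - 2*Cc*‖x - y‖^2)) with hwwdef
  have w_bdd : ∀ x : E, BddAbove (Set.range (fun y => gg y - 2*Cc*‖x - y‖^2)) := by
    intro x
    exact ⟨f x₀ + (3/(4*Cc))*N^2 + 4*Cc*‖x-x₀‖^2, by rintro v ⟨y, rfl⟩; exact wterm_le x y⟩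
  have w_ge : ∀ x y : E, gg y - 2*Cc*‖x - y‖^2 ≤ ww x :=
    fun x y => le_csSup (w_bdd x) ⟨y, rfl⟩
  have w_le : ∀ (x : E) (b : ℝ), (∀ y : E, gg y - 2*Cc*‖x - y‖^2 ≤ b) → ww x ≤ b := by
    intro x b hb
    apply csSup_le (Set.range_nonempty _)
    rintro v ⟨y, rfl⟩
    exact hb y
  -- preservation on D
  have w_eqD : ∀ x₁ ∈ D, ww x₁ = f x₁ := by
    intro x₁ hx₁
    have hle : ww x₁ ≤ f x₁ := by
      apply w_le
      intro y
      obtain ⟨qq, hqq⟩ : ∃ qq : E, qq = (1/(6*Cc)) • p x₁ := ⟨_, rfl⟩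
      have hpq : (6*Cc)•qq = p x₁ := by
        rw [hqq, smul_smul, show (6*Cc)*(1/(6*Cc)) = 1 by field_simp, one_smul]
      have hz1 := m_le (x₁ + ((2/3:ℝ)•(y - x₁) - qq)) x₁ hx₁
      rw [add_sub_cancel_left] at hz1
      have hgy := g_le y (x₁ + ((2/3:ℝ)•(y - x₁) - qq))
      have hyz : y - (x₁ + ((2/3:ℝ)•(y - x₁) - qq)) = (1/3:ℝ)•(y - x₁) + qq := by
        module
      rw [hyz] at hgy
      have hkey := pres_ub Cc hC qq (y - x₁)
      rw [hpq] at hkey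
      have hrev : 2*Cc*‖x₁ - y‖^2 = 2*Cc*‖y - x₁‖^2 := by rw [norm_sub_rev]
      linarith [hz1, hgy, hkey, hrev.le, hrev.ge]
    have hge : f x₁ ≤ ww x₁ := by
      obtain ⟨qq, hqq⟩ : ∃ qq : E, qq = (1/(4*Cc)) • p x₁ := ⟨_, rfl⟩
      have hpq : (4*Cc)•qq = p x₁ := by
        rw [hqq, smul_smul, show (4*Cc)*(1/(4*Cc)) = 1 by field_simp, one_smul]
      have hgy : f x₁ + 2*Cc*‖qq‖^2 ≤ gg (x₁ + qq) := by
        apply le_csInf (Set.range_nonempty _)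
        rintro v ⟨z, rfl⟩
        dsimp only
        have h1 := m_ge z x₁ hx₁
        have hkey := pres_lb Cc hC qq (z - x₁)
        rw [hpq] at hkey
        have hyz : 2*Cc*‖x₁ + qq - z‖^2 = 2*Cc*‖qq - (z - x₁)‖^2 := by
          rw [show x₁ + qq - z = qq - (z - x₁) by abel]
        linarith [h1, hkey, hyz.le, hyz.ge]
      have h2 := w_ge x₁ (x₁ + qq)
      have hxy : 2*Cc*‖x₁ - (x₁ + qq)‖^2 = 2*Cc*‖qq‖^2 := by
        rw [show x₁ - (x₁ + qq) = -qq by abel, norm_neg]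
      linarith [hgy, h2, hxy.le, hxy.ge]
    linarith [hle, hge]
  -- two-sided paraboloids at every point
  have main : ∀ x : E, ∃ q : E, ∀ z : E,
      |ww z - ww x - ⟪q, z - x⟫| ≤ (2*Cc) * ‖z - x‖^2 := by
    intro x
    have w_lt : ∀ b : ℝ, b < ww x → ∃ y, b < gg y - 2*Cc*‖x - y‖^2 := by
      intro b hb
      simp only [hwwdef] at hb
      obtain ⟨v, ⟨y, rfl⟩, hv⟩ := exists_lt_of_lt_csSup (Set.range_nonempty _) hb
      exact ⟨y, hv⟩
    obtain ⟨Rx, hRxdef⟩ : ∃ R : ℝ,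
        R = Real.sqrt ((6/Cc)*(f x₀ + 4*Cc*‖x-x₀‖^2 + 1 - ww x) + (9/Cc^2)*N^2) := ⟨_, rfl⟩
    have hRb : ∀ y : E, ww x - 1 ≤ gg y - 2*Cc*‖x - y‖^2 → ‖y - x₀‖ ≤ Rx := by
      intro y hy
      have h1 := wterm_le' x y
      have hamgm2 : N*‖y-x₀‖ ≤ Cc/6*‖y-x₀‖^2 + 3/(2*Cc)*N^2 := by
        rw [← sub_nonneg]
        have h : Cc/6*‖y-x₀‖^2 + 3/(2*Cc)*N^2 - N*‖y-x₀‖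
            = (Cc*‖y-x₀‖ - 3*N)^2/(6*Cc) := by
          field_simp
          ring
        rw [h]
        positivity
      have h6 : (Cc/6)*‖y-x₀‖^2 ≤ (f x₀ + 4*Cc*‖x-x₀‖^2 + 1 - ww x) + (3/(2*Cc))*N^2 := by
        linarith
      have hmul := mul_le_mul_of_nonneg_left h6 (le_of_lt (show (0:ℝ) < 6/Cc by positivity))
      have hid : (6/Cc)*((Cc/6)*‖y-x₀‖^2) = ‖y-x₀‖^2 := by
        field_simp
      have hid2 : (6/Cc)*((f x₀ + 4*Cc*‖x-x₀‖^2 + 1 - ww x) + (3/(2*Cc))*N^2)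
          = (6/Cc)*(f x₀ + 4*Cc*‖x-x₀‖^2 + 1 - ww x) + (9/Cc^2)*N^2 := by
        field_simp
        ring
      have hr2 : ‖y-x₀‖^2 ≤ (6/Cc)*(f x₀ + 4*Cc*‖x-x₀‖^2 + 1 - ww x) + (9/Cc^2)*N^2 := by
        linarith [hmul, hid.le, hid.ge, hid2.le, hid2.ge]
      have hs := Real.sqrt_le_sqrt hr2
      rw [Real.sqrt_sq (norm_nonneg _)] at hs
      rw [hRxdef]
      exact hs
    have hysq : ∀ k : ℕ, ∃ y, ww x - 1/((k:ℝ)+1) < gg y - 2*Cc*‖x - y‖^2 := by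
      intro k
      apply w_lt
      have hpos : (0:ℝ) < 1/((k:ℝ)+1) := by positivity
      linarith
    choose ys hys2 using hysq
    have hmemb : ∀ k, ys k ∈ Metric.closedBall x₀ Rx := by
      intro k
      rw [Metric.mem_closedBall, dist_eq_norm]
      apply hRb
      have hk1 : 1/((k:ℝ)+1) ≤ 1 := by
        rw [div_le_one (by positivity)]
        linarith [(Nat.cast_nonneg k : (0:ℝ) ≤ (k:ℝ))]
      linarith [hys2 k]
    obtain ⟨ystar, -, φi, hφmono, hφt⟩ :=
      tendsto_subseq_of_bounded Metric.isBounded_closedBall hmemb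
    refine ⟨(4*Cc)•(ystar - x), ?_⟩
    have hiden : ∀ y z : E, 2*Cc*‖x - y‖^2 - 2*Cc*‖z - y‖^2
        = 4*Cc*⟪y - x, z - x⟫ - 2*Cc*‖z - x‖^2 := by
      intro y z
      have h := norm_add_sq_real (z - x) (x - y)
      rw [show (z - x) + (x - y) = z - y by abel] at h
      have hc : ⟪z - x, x - y⟫ = -⟪y - x, z - x⟫ := by
        rw [real_inner_comm, show x - y = -(y - x) by abel, inner_neg_left]
      rw [hc] at h
      linear_combination (-2*Cc) * h
    have lower : ∀ z : E,
        ww x + ⟪(4*Cc)•(ystar - x), z - x⟫ - 2*Cc*‖z - x‖^2 ≤ ww z := by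
      intro z
      have hk : ∀ k : ℕ, ww x - 1/((φi k : ℝ)+1) + 4*Cc*⟪ys (φi k) - x, z - x⟫
          - 2*Cc*‖z - x‖^2 ≤ ww z := by
        intro k
        have h1 := hys2 (φi k)
        have h2 := w_ge z (ys (φi k))
        have h3 := hiden (ys (φi k)) z
        linarith [h1, h2, h3.le, h3.ge]
      have t1 : Tendsto (fun k : ℕ => 1/((φi k : ℝ)+1)) atTop (𝓝 0) :=
        tendsto_one_div_add_atTop_nhds_zero_nat.comp hφmono.tendsto_atTop
      have t2 : Tendsto (fun k : ℕ => ⟪ys (φi k) - x, z - x⟫) atTop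
          (𝓝 ⟪ystar - x, z - x⟫) :=
        Filter.Tendsto.inner (hφt.sub tendsto_const_nhds) tendsto_const_nhds
      have htd : Tendsto (fun k : ℕ => ww x - 1/((φi k : ℝ)+1)
          + 4*Cc*⟪ys (φi k) - x, z - x⟫ - 2*Cc*‖z - x‖^2) atTop
          (𝓝 (ww x - 0 + 4*Cc*⟪ystar - x, z - x⟫ - 2*Cc*‖z - x‖^2)) :=
        ((tendsto_const_nhds.sub t1).add (t2.const_mul (4*Cc))).sub_const _
      have hlim := le_of_tendsto htd (Eventually.of_forall hk)
      have hsm : ⟪(4*Cc)•(ystar - x), z - x⟫ = 4*Cc*⟪ystar - x, z - x⟫ :=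
        real_inner_smul_left _ _ _
      linarith [hlim, hsm.le, hsm.ge]
    have hstar : ww x = gg ystar - 2*Cc*‖x - ystar‖^2 := by
      refine le_antisymm ?_ (w_ge x ystar)
      by_contra hcon
      push_neg at hcon
      obtain ⟨ε, hεdef⟩ : ∃ ε : ℝ,
          ε = (ww x - (gg ystar - 2*Cc*‖x - ystar‖^2))/3 := ⟨_, rfl⟩
      have hε : 0 < ε := by rw [hεdef]; linarith
      have hev1 : ∀ᶠ k in atTop, gg (ys (φi k)) < gg ystar + ε :=
        hφt.eventually (g_usc ystar ε hε)
      have t3 : Tendsto (fun k : ℕ => 2*Cc*‖x - ys (φi k)‖^2) atTop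
          (𝓝 (2*Cc*‖x - ystar‖^2)) := by
        have tn : Tendsto (fun k : ℕ => ‖x - ys (φi k)‖) atTop (𝓝 ‖x - ystar‖) :=
          (tendsto_const_nhds.sub hφt).norm
        exact (tn.pow 2).const_mul (2*Cc)
      have hev2 : ∀ᶠ k in atTop, 2*Cc*‖x - ystar‖^2 - ε < 2*Cc*‖x - ys (φi k)‖^2 :=
        t3.eventually_const_lt (by linarith)
      have t4 : Tendsto (fun k : ℕ => 1/((φi k : ℝ)+1)) atTop (𝓝 0) :=
        tendsto_one_div_add_atTop_nhds_zero_nat.comp hφmono.tendsto_atTop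
      have hev3 : ∀ᶠ k in atTop, 1/((φi k : ℝ)+1) < ε := t4.eventually_lt_const hε
      obtain ⟨k, ⟨hk1, hk2⟩, hk3⟩ := ((hev1.and hev2).and hev3).exists
      have h5 := hys2 (φi k)
      linarith [h5, hk1, hk2, hk3, hεdef.le, hεdef.ge]
    have gupper : ∀ y : E, gg y ≤ gg ystar + ⟪(4*Cc)•(ystar - x), y - ystar⟫
        + 2*Cc*‖y - ystar‖^2 := by
      intro y
      have h1 := w_ge x y
      rw [hstar] at h1
      have h2 := norm_add_sq_real (x - ystar) (ystar - y)
      rw [show (x - ystar) + (ystar - y) = x - y by abel] at h2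
      have h3 : ⟪x - ystar, ystar - y⟫ = ⟪ystar - x, y - ystar⟫ := by
        rw [show x - ystar = -(ystar - x) by abel, show ystar - y = -(y - ystar) by abel,
          inner_neg_neg]
      rw [h3] at h2
      have h4 : ‖ystar - y‖^2 = ‖y - ystar‖^2 := by rw [norm_sub_rev]
      rw [h4] at h2
      have h2' : 2*Cc*‖x - y‖^2 = 2*Cc*‖x - ystar‖^2
          + 4*Cc*⟪ystar - x, y - ystar⟫ + 2*Cc*‖y - ystar‖^2 := by
        linear_combination (2*Cc) * h2
      have hsm : ⟪(4*Cc)•(ystar - x), y - ystar⟫ = 4*Cc*⟪ystar - x, y - ystar⟫ :=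
        real_inner_smul_left _ _ _
      linarith [h1, h2'.le, h2'.ge, hsm.le, hsm.ge]
    have hA : ∀ y : E, gg y - gg ystar - ⟪(4*Cc)•(ystar - x), y - ystar⟫
        ≤ 2*Cc*‖y - ystar‖^2 := by
      intro y
      linarith [gupper y]
    have hB : ∀ y : E, gg y - gg ystar - ⟪(4*Cc)•(ystar - x), y - ystar⟫
        ≤ 2*(gg ((1/2:ℝ)•(ystar + y)) - gg ystar
          - ⟪(4*Cc)•(ystar - x), (1/2:ℝ)•(ystar + y) - ystar⟫)
          + (2*Cc/3/2)*‖y - ystar‖^2 := by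
      intro y
      have hgm := g_mid ystar y
      have hmids : (1/2:ℝ)•(ystar + y) - ystar = (1/2:ℝ)•(y - ystar) := by module
      have hsm2 : ⟪(4*Cc)•(ystar - x), (1/2:ℝ)•(ystar + y) - ystar⟫
          = (1/2)*⟪(4*Cc)•(ystar - x), y - ystar⟫ := by
        rw [hmids, real_inner_smul_right]
      have hrev : ‖ystar - y‖^2 = ‖y - ystar‖^2 := by rw [norm_sub_rev]
      rw [hrev] at hgm
      linarith [hgm, hsm2.le, hsm2.ge]
    have himp := improve (fun y => gg y - gg ystar - ⟪(4*Cc)•(ystar - x), y - ystar⟫)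
      ystar (2*Cc) (2*Cc/3) hA hB
    have upper : ∀ z : E,
        ww z ≤ ww x + ⟪(4*Cc)•(ystar - x), z - x⟫ + 2*Cc*‖z - x‖^2 := by
      intro z
      apply w_le
      intro y
      have h1 := himp y
      have hkey := vec_upper Cc hC (y - ystar) (z - x) (x - ystar)
      rw [show (x - ystar) + (z - x) - (y - ystar) = z - y from by abel] at hkey
      have e4 : ⟪x - ystar, (z - x) - (y - ystar)⟫
          = -⟪ystar - x, z - x⟫ + ⟪ystar - x, y - ystar⟫ := by
        rw [show x - ystar = -(ystar - x) by abel, inner_neg_left, inner_sub_right]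
        ring
      rw [e4] at hkey
      have hs1 : ⟪(4*Cc)•(ystar - x), z - x⟫ = 4*Cc*⟪ystar - x, z - x⟫ :=
        real_inner_smul_left _ _ _
      have hs2 : ⟪(4*Cc)•(ystar - x), y - ystar⟫ = 4*Cc*⟪ystar - x, y - ystar⟫ :=
        real_inner_smul_left _ _ _
      linarith [h1, hkey, hstar.le, hstar.ge, hs1.le, hs1.ge, hs2.le, hs2.ge]
    intro z
    rw [abs_le]
    constructor
    · linarith [lower z]
    · linarith [upper z]
  choose PP hPP using main
  exact ⟨ww, PP, 2*Cc, by linarith, w_eqD, fun x z => hPP x z⟩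

lemma le_of_sq_le_sq' (a b : ℝ) (ha : 0 ≤ a) (hb : 0 ≤ b) (h : a^2 ≤ b^2) : a ≤ b := by
  by_contra hcon
  push_neg at hcon
  nlinarith [mul_pos (sub_pos.2 hcon) (lt_of_le_of_lt hb (lt_of_le_of_lt (le_add_of_nonneg_left hb) (by linarith : b + b < a + b)))]

set_option maxHeartbeats 2000000 in
lemma window_map (n : ℕ) (u : EuclideanSpace ℝ (Fin (n+1)) → ℝ) (s ρ : ℝ) (hρ : 0 < ρ)
    (e q : EuclideanSpace ℝ (Fin (n+1))) (he : ‖e‖ = 1) :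
    ∃ F : EuclideanSpace ℝ (Fin n) → EuclideanSpace ℝ (Fin (n+1)),
      (Differentiable ℝ F ∧ ∃ Knn : NNReal, LipschitzWith Knn (fderiv ℝ F)) ∧
      ∀ y, (u y = s ∧ ∃ v, ‖v‖ = 1 ∧ ‖v - e‖ ≤ 1/4 ∧
          Metric.ball (y + ρ•v) ρ ⊆ {w | s < u w} ∧
          Metric.ball (y - ρ•v) ρ ⊆ {w | u w < s}) →
        y ∈ Metric.ball q (ρ/4) → y ∈ Set.range F := by
  classical
  set Wp : EuclideanSpace ℝ (Fin (n+1)) → Prop := fun y => (u y = s ∧ ∃ v, ‖v‖ = 1 ∧ ‖v - e‖ ≤ 1/4 ∧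
      Metric.ball (y + ρ•v) ρ ⊆ {w | s < u w} ∧
      Metric.ball (y - ρ•v) ρ ⊆ {w | u w < s}) ∧ y ∈ Metric.ball q (ρ/4) with hWpdef
  by_cases hWne : ∃ y₀, Wp y₀
  swap
  · refine ⟨fun _ => 0, ⟨differentiable_const _, ⟨0, ?_⟩⟩, ?_⟩
    · have hfd : (fderiv ℝ (fun _ : EuclideanSpace ℝ (Fin n) => (0:EuclideanSpace ℝ (Fin (n+1))))) = fun _ => 0 := by
        ext1 x
        simp [fderiv_const]
      rw [hfd]
      exact LipschitzWith.const' 0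
    · intro y hy hball
      exact absurd ⟨y, hy, hball⟩ hWne
  obtain ⟨y₀, hy₀⟩ := hWne
  -- subspace setup
  have hne : e ≠ 0 := by
    intro h
    rw [h, norm_zero] at he
    norm_num at he
  haveI hfact : Fact (Module.finrank ℝ (EuclideanSpace ℝ (Fin (n+1))) = n + 1) := ⟨finrank_euclideanSpace_fin⟩
  have hrank : Module.finrank ℝ ((Submodule.span ℝ {e})ᗮ) = n :=
    Submodule.finrank_orthogonal_span_singleton hne
  let eqv : EuclideanSpace ℝ (Fin n) ≃ₗᵢ[ℝ] ((Submodule.span ℝ {e})ᗮ) :=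
    (LinearIsometryEquiv.piLpCongrLeft 2 ℝ ℝ (finCongr hrank.symm)).trans
      (stdOrthonormalBasis ℝ ((Submodule.span ℝ {e})ᗮ)).repr.symm
  let ι : EuclideanSpace ℝ (Fin n) → EuclideanSpace ℝ (Fin (n+1)) := fun v => ((eqv v : (Submodule.span ℝ {e})ᗮ) : EuclideanSpace ℝ (Fin (n+1)))
  have ι_sub : ∀ a b, ι a - ι b = ι (a - b) := by
    intro a b
    simp only [ι]
    rw [← Submodule.coe_sub, ← map_sub]
  have ι_smul : ∀ (c : ℝ) (a : EuclideanSpace ℝ (Fin n)), ι (c • a) = c • ι a := by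
    intro c a
    simp only [ι, map_smul]
    rfl
  have ι_norm : ∀ a, ‖ι a‖ = ‖a‖ := by
    intro a
    simp only [ι]
    rw [Submodule.norm_coe]
    exact eqv.norm_map a
  have ι_inner : ∀ a b, ⟪ι a, ι b⟫ = ⟪a, b⟫ := by
    intro a b
    have h := eqv.inner_map_map a b
    rw [← h, Submodule.coe_inner]
  have ι_e : ∀ a, ⟪ι a, e⟫ = 0 := by
    intro a
    have hm := (eqv a).2
    have h := Submodule.mem_orthogonal_singleton_iff_inner_right.1 hm
    rw [real_inner_comm] at h
    exact h
  have proj_mem : ∀ y : EuclideanSpace ℝ (Fin (n+1)), y - ⟪y, e⟫ • e ∈ ((Submodule.span ℝ {e})ᗮ) := by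
    intro y
    rw [Submodule.mem_orthogonal_singleton_iff_inner_right]
    rw [inner_sub_right, real_inner_smul_right, real_inner_self_eq_norm_sq, he]
    rw [real_inner_comm]
    ring
  let proj : EuclideanSpace ℝ (Fin (n+1)) → EuclideanSpace ℝ (Fin n) := fun y => eqv.symm ⟨y - ⟪y, e⟫ • e, proj_mem y⟩
  have ι_proj : ∀ y, ι (proj y) = y - ⟪y, e⟫ • e := by
    intro y
    simp only [ι, proj, LinearIsometryEquiv.apply_symm_apply]
  -- normals choice
  have hvex : ∀ y : EuclideanSpace ℝ (Fin (n+1)), ∃ v : EuclideanSpace ℝ (Fin (n+1)), Wp y → (‖v‖ = 1 ∧ ‖v - e‖ ≤ 1/4 ∧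
      Metric.ball (y + ρ•v) ρ ⊆ {w | s < u w} ∧
      Metric.ball (y - ρ•v) ρ ⊆ {w | u w < s}) := by
    intro y
    by_cases hy : Wp y
    · obtain ⟨⟨_, v, hv⟩, _⟩ := hy
      exact ⟨v, fun _ => hv⟩
    · exact ⟨e, fun h => absurd h hy⟩
  choose vv hvv using hvex
  -- two-sided ball inequalities
  have pairA : ∀ y₁, Wp y₁ → ∀ y₂, Wp y₂ →
      2*ρ*⟪y₂ - y₁, vv y₁⟫ ≤ ‖y₂ - y₁‖^2 := by
    intro y₁ h₁ y₂ h₂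
    obtain ⟨hn1, hd1, hb1p, hb1m⟩ := hvv y₁ h₁
    have hnot1 : ρ ≤ dist y₂ (y₁ + ρ•vv y₁) := by
      by_contra hlt
      push_neg at hlt
      have hmem := hb1p (Metric.mem_ball.2 hlt)
      rw [Set.mem_setOf_eq, h₂.1.1] at hmem
      exact lt_irrefl s hmem
    have he1 : dist y₂ (y₁ + ρ•vv y₁) = ‖(y₂ - y₁) - ρ•vv y₁‖ := by
      rw [dist_eq_norm]
      congr 1
      abel
    rw [he1] at hnot1
    have hsq1 : ρ^2 ≤ ‖(y₂ - y₁) - ρ•vv y₁‖^2 := pow_le_pow_left₀ hρ.le hnot1 2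
    have hexp1 : ‖(y₂ - y₁) - ρ•vv y₁‖^2
        = ‖y₂-y₁‖^2 - 2*ρ*⟪y₂-y₁, vv y₁⟫ + ρ^2 := by
      rw [norm_sub_sq_real, real_inner_smul_right, norm_smul, Real.norm_eq_abs,
        abs_of_pos hρ, hn1]
      ring
    rw [hexp1] at hsq1
    linarith
  have pairB : ∀ y₁, Wp y₁ → ∀ y₂, Wp y₂ →
      -(‖y₂ - y₁‖^2) ≤ 2*ρ*⟪y₂ - y₁, vv y₁⟫ := by
    intro y₁ h₁ y₂ h₂
    obtain ⟨hn1, hd1, hb1p, hb1m⟩ := hvv y₁ h₁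
    have hnot1 : ρ ≤ dist y₂ (y₁ - ρ•vv y₁) := by
      by_contra hlt
      push_neg at hlt
      have hmem := hb1m (Metric.mem_ball.2 hlt)
      rw [Set.mem_setOf_eq, h₂.1.1] at hmem
      exact lt_irrefl s hmem
    have he1 : dist y₂ (y₁ - ρ•vv y₁) = ‖(y₂ - y₁) + ρ•vv y₁‖ := by
      rw [dist_eq_norm]
      congr 1
      abel
    rw [he1] at hnot1
    have hsq1 : ρ^2 ≤ ‖(y₂ - y₁) + ρ•vv y₁‖^2 := pow_le_pow_left₀ hρ.le hnot1 2
    have hexp1 : ‖(y₂ - y₁) + ρ•vv y₁‖^2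
        = ‖y₂-y₁‖^2 + 2*ρ*⟪y₂-y₁, vv y₁⟫ + ρ^2 := by
      rw [norm_add_sq_real, real_inner_smul_right, norm_smul, Real.norm_eq_abs,
        abs_of_pos hρ, hn1]
      ring
    rw [hexp1] at hsq1
    linarith
  -- normal alignment (Lipschitz normals)
  have pairV : ∀ y₁, Wp y₁ → ∀ y₂, Wp y₂ →
      ρ*‖vv y₁ - vv y₂‖ ≤ ‖y₁ - y₂‖ := by
    intro y₁ h₁ y₂ h₂
    obtain ⟨hn1, hd1, hb1p, hb1m⟩ := hvv y₁ h₁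
    obtain ⟨hn2, hd2, hb2p, hb2m⟩ := hvv y₂ h₂
    have hcent : ∀ (c₁ c₂ : EuclideanSpace ℝ (Fin (n+1))), Metric.ball c₁ ρ ⊆ {w | s < u w} →
        Metric.ball c₂ ρ ⊆ {w | u w < s} → 2*ρ ≤ ‖c₁ - c₂‖ := by
      intro c₁ c₂ hc₁ hc₂
      by_contra hlt
      push_neg at hlt
      have hm1 : dist ((1/2:ℝ)•(c₁+c₂)) c₁ < ρ := by
        have hv : (1/2:ℝ)•(c₁+c₂) - c₁ = (1/2:ℝ)•(c₂ - c₁) := by module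
        rw [dist_eq_norm, hv, norm_smul, Real.norm_eq_abs,
          abs_of_nonneg (by norm_num : (0:ℝ) ≤ 1/2), norm_sub_rev]
        linarith
      have hm2 : dist ((1/2:ℝ)•(c₁+c₂)) c₂ < ρ := by
        have hv : (1/2:ℝ)•(c₁+c₂) - c₂ = (1/2:ℝ)•(c₁ - c₂) := by module
        rw [dist_eq_norm, hv, norm_smul, Real.norm_eq_abs,
          abs_of_nonneg (by norm_num : (0:ℝ) ≤ 1/2)]
        linarith
      have hin1 := hc₁ (Metric.mem_ball.2 hm1)
      have hin2 := hc₂ (Metric.mem_ball.2 hm2)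
      rw [Set.mem_setOf_eq] at hin1 hin2
      linarith
    have h1 := hcent (y₁ + ρ•vv y₁) (y₂ - ρ•vv y₂) hb1p hb2m
    have h2 := hcent (y₂ + ρ•vv y₂) (y₁ - ρ•vv y₁) hb2p hb1m
    have e1 : (y₁ + ρ•vv y₁) - (y₂ - ρ•vv y₂) = (y₁ - y₂) + ρ•(vv y₁ + vv y₂) := by
      module
    have e2 : (y₂ + ρ•vv y₂) - (y₁ - ρ•vv y₁) = ρ•(vv y₁ + vv y₂) - (y₁ - y₂) := by
      module
    rw [e1] at h1
    rw [e2, norm_sub_rev] at h2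
    have hsq1 : (2*ρ)^2 ≤ ‖(y₁-y₂) + ρ•(vv y₁ + vv y₂)‖^2 :=
      pow_le_pow_left₀ (by positivity) h1 2
    have hsq2 : (2*ρ)^2 ≤ ‖(y₁-y₂) - ρ•(vv y₁ + vv y₂)‖^2 :=
      pow_le_pow_left₀ (by positivity) h2 2
    have hpar := parallelogram_law_with_norm ℝ (y₁ - y₂) (ρ•(vv y₁ + vv y₂))
    have hnormB : ‖ρ•(vv y₁ + vv y₂)‖^2 = ρ^2*‖vv y₁ + vv y₂‖^2 := by
      rw [norm_smul, Real.norm_eq_abs, abs_of_pos hρ]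
      ring
    have hsum : ρ^2*‖vv y₁ + vv y₂‖^2 + ρ^2*‖vv y₁ - vv y₂‖^2 = 4*ρ^2 := by
      have hp2 := parallelogram_law_with_norm ℝ (vv y₁) (vv y₂)
      rw [hn1, hn2] at hp2
      nlinarith [hp2]
    have key : (ρ*‖vv y₁ - vv y₂‖)^2 ≤ ‖y₁-y₂‖^2 := by
      simp only [pow_two] at *
      nlinarith [hpar, hsq1, hsq2, hsum, hnormB]
    exact le_of_sq_le_sq' _ _ (by positivity) (norm_nonneg _) key
  -- graph estimates
  have hgraph : ∀ y₁, Wp y₁ → ∀ y₂, Wp y₂ →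
      |⟪y₂ - y₁, e⟫| ≤ (1/2)*‖y₂ - y₁‖ ∧ ‖y₂ - y₁‖ ≤ 2*‖proj y₂ - proj y₁‖ := by
    intro y₁ h₁ y₂ h₂
    obtain ⟨hn1, hd1, _, _⟩ := hvv y₁ h₁
    have hA := pairA y₁ h₁ y₂ h₂
    have hB := pairB y₁ h₁ y₂ h₂
    have hdist : ‖y₂ - y₁‖ ≤ ρ/2 := by
      have t1 : dist y₂ q < ρ/4 := Metric.mem_ball.1 h₂.2
      have t2 : dist y₁ q < ρ/4 := Metric.mem_ball.1 h₁.2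
      have t3 := dist_triangle y₂ q y₁
      have t4 : dist q y₁ = dist y₁ q := dist_comm _ _
      have t5 : ‖y₂ - y₁‖ = dist y₂ y₁ := (dist_eq_norm _ _).symm
      linarith
    have hsplit : ⟪y₂ - y₁, e⟫ = ⟪y₂ - y₁, vv y₁⟫ + ⟪y₂ - y₁, e - vv y₁⟫ := by
      rw [← inner_add_right]
      congr 1
      abel
    have hbd2 : |⟪y₂ - y₁, e - vv y₁⟫| ≤ (1/4)*‖y₂ - y₁‖ := by
      have hb := abs_real_inner_le_norm (y₂ - y₁) (e - vv y₁)
      have hev : ‖e - vv y₁‖ ≤ 1/4 := by rw [norm_sub_rev]; exact hd1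
      calc |⟪y₂-y₁, e - vv y₁⟫| ≤ ‖y₂-y₁‖*‖e - vv y₁‖ := hb
        _ ≤ ‖y₂-y₁‖*(1/4) := mul_le_mul_of_nonneg_left hev (norm_nonneg _)
        _ = (1/4)*‖y₂-y₁‖ := by ring
    have hdd := mul_le_mul_of_nonneg_left hdist (norm_nonneg (y₂ - y₁))
    have habs1 : |⟪y₂ - y₁, vv y₁⟫| ≤ (1/4)*‖y₂ - y₁‖ := by
      rw [abs_le]
      constructor
      · nlinarith [hB, hdd, hρ, norm_nonneg (y₂ - y₁)]
      · nlinarith [hA, hdd, hρ, norm_nonneg (y₂ - y₁)]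
    have h1 : |⟪y₂ - y₁, e⟫| ≤ (1/2)*‖y₂-y₁‖ := by
      calc |⟪y₂-y₁,e⟫| ≤ |⟪y₂-y₁,vv y₁⟫| + |⟪y₂-y₁, e - vv y₁⟫| := by
            rw [hsplit]; exact abs_add_le _ _
        _ ≤ (1/4)*‖y₂-y₁‖ + (1/4)*‖y₂-y₁‖ := by linarith
        _ = (1/2)*‖y₂-y₁‖ := by ring
    have hdec : ι (proj y₂ - proj y₁) = (y₂ - y₁) - ⟪y₂ - y₁, e⟫ • e := by
      rw [← ι_sub, ι_proj, ι_proj, inner_sub_left, sub_smul]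
      abel
    have hy : y₂ - y₁ = ι (proj y₂ - proj y₁) + ⟪y₂ - y₁, e⟫ • e := by
      rw [hdec]
      abel
    have hnorm2 : ‖y₂ - y₁‖^2 = ‖proj y₂ - proj y₁‖^2 + ⟪y₂ - y₁, e⟫^2 := by
      calc ‖y₂ - y₁‖^2 = ‖ι (proj y₂ - proj y₁) + ⟪y₂ - y₁, e⟫ • e‖^2 := by rw [← hy]
        _ = ‖ι (proj y₂ - proj y₁)‖^2 + 2*⟪ι (proj y₂ - proj y₁), ⟪y₂ - y₁, e⟫ • e⟫
            + ‖⟪y₂ - y₁, e⟫ • e‖^2 := norm_add_sq_real _ _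
        _ = ‖proj y₂ - proj y₁‖^2 + ⟪y₂ - y₁, e⟫^2 := by
            rw [real_inner_smul_right, ι_e, ι_norm, norm_smul, Real.norm_eq_abs, he]
            rw [mul_pow, sq_abs]
            ring
    have h2 : ‖y₂ - y₁‖ ≤ 2*‖proj y₂ - proj y₁‖ := by
      have h1' : ⟪y₂-y₁,e⟫^2 ≤ ((1/2)*‖y₂-y₁‖)^2 := by
        rw [← sq_abs]
        exact pow_le_pow_left₀ (abs_nonneg _) h1 2
      have hsq : ‖y₂-y₁‖^2 ≤ (2*‖proj y₂ - proj y₁‖)^2 := by nlinarith [hnorm2, h1']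
      exact le_of_sq_le_sq' _ _ (norm_nonneg _) (by positivity) hsq
    exact ⟨h1, h2⟩
  -- lower bound on the inner product with e
  have hlow : ∀ y₁, Wp y₁ → 3/4 ≤ ⟪vv y₁, e⟫ := by
    intro y₁ h₁
    obtain ⟨hn1, hd1, _, _⟩ := hvv y₁ h₁
    have hns := norm_sub_sq_real (vv y₁) e
    rw [hn1, he] at hns
    have hle := pow_le_pow_left₀ (norm_nonneg (vv y₁ - e)) hd1 2
    nlinarith [hns, hle]
  -- the slope map
  set pp : EuclideanSpace ℝ (Fin (n+1)) → EuclideanSpace ℝ (Fin n) :=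
    fun y => (-(⟪vv y, e⟫)⁻¹) • proj (vv y) with hppdef
  have hdec : ∀ y₁ y₂ : EuclideanSpace ℝ (Fin (n+1)),
      ι (proj y₂ - proj y₁) = (y₂ - y₁) - ⟪y₂ - y₁, e⟫ • e := by
    intro y₁ y₂
    rw [← ι_sub, ι_proj, ι_proj, inner_sub_left, sub_smul]
    abel
  have hee : ⟪e, e⟫ = (1:ℝ) := by
    rw [real_inner_self_eq_norm_sq, he]
    norm_num
  -- the Whitney estimate for the height function
  have hwhit : ∀ y₁, Wp y₁ → ∀ y₂, Wp y₂ →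
      |⟪y₂, e⟫ - ⟪y₁, e⟫ - ⟪pp y₁, proj y₂ - proj y₁⟫|
        ≤ (3/ρ)*‖proj y₂ - proj y₁‖^2 := by
    intro y₁ h₁ y₂ h₂
    have ha1 := hlow y₁ h₁
    have ha1pos : (0:ℝ) < ⟪vv y₁, e⟫ := by linarith
    have ha1ne : ⟪vv y₁, e⟫ ≠ 0 := ne_of_gt ha1pos
    have c1 : ⟪pp y₁, proj y₂ - proj y₁⟫ = ⟪ι (pp y₁), ι (proj y₂ - proj y₁)⟫ :=
      (ι_inner _ _).symm
    have c2 : ι (pp y₁) = (-(⟪vv y₁, e⟫)⁻¹) • (vv y₁ - ⟪vv y₁, e⟫ • e) := by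
      rw [hppdef]
      dsimp only
      rw [ι_smul, ι_proj]
    have hcomm : ⟪e, y₂ - y₁⟫ = ⟪y₂ - y₁, e⟫ := real_inner_comm _ _
    have hinner1 : ⟪vv y₁ - ⟪vv y₁,e⟫ • e, (y₂-y₁) - ⟪y₂-y₁,e⟫ • e⟫
        = ⟪vv y₁, y₂ - y₁⟫ - ⟪vv y₁,e⟫ * ⟪y₂-y₁,e⟫ := by
      simp only [inner_sub_left, inner_sub_right, real_inner_smul_left,
        real_inner_smul_right, hee]
      rw [real_inner_comm e y₂, real_inner_comm e y₁]
      ring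
    have hkey : ⟪y₂,e⟫ - ⟪y₁,e⟫ - ⟪pp y₁, proj y₂ - proj y₁⟫
        = (⟪vv y₁,e⟫)⁻¹ * ⟪vv y₁, y₂ - y₁⟫ := by
      have hds : ⟪y₂,e⟫ - ⟪y₁,e⟫ = ⟪y₂ - y₁, e⟫ := (inner_sub_left _ _ _).symm
      rw [hds, c1, c2, hdec y₁ y₂, real_inner_smul_left, hinner1]
      linear_combination (-⟪y₂ - y₁, e⟫) * (inv_mul_cancel₀ ha1ne)
    rw [hkey, abs_mul, abs_of_pos (inv_pos.2 ha1pos)]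
    have hXc : ⟪vv y₁, y₂ - y₁⟫ = ⟪y₂ - y₁, vv y₁⟫ := real_inner_comm _ _
    have hX : 2*ρ*|⟪vv y₁, y₂ - y₁⟫| ≤ ‖y₂ - y₁‖^2 := by
      rcases abs_cases ⟪vv y₁, y₂ - y₁⟫ with ⟨hc, _⟩ | ⟨hc, _⟩
      · rw [hc, hXc]
        exact pairA y₁ h₁ y₂ h₂
      · rw [hc, hXc]
        have := pairB y₁ h₁ y₂ h₂
        linarith
    have hinv : (⟪vv y₁, e⟫)⁻¹ ≤ 4/3 := by
      rw [show (4:ℝ)/3 = (3/4)⁻¹ by norm_num]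
      exact inv_anti₀ (by norm_num) ha1
    have hd2δ := (hgraph y₁ h₁ y₂ h₂).2
    have hd4 : ‖y₂-y₁‖^2 ≤ 4*‖proj y₂ - proj y₁‖^2 := by
      nlinarith [hd2δ, norm_nonneg (y₂-y₁), norm_nonneg (proj y₂ - proj y₁)]
    rw [show (3/ρ)*‖proj y₂ - proj y₁‖^2 = 3*‖proj y₂ - proj y₁‖^2/ρ by ring,
      le_div_iff₀ hρ]
    have hstep := mul_le_mul_of_nonneg_right hinv
      (mul_nonneg (abs_nonneg ⟪vv y₁, y₂ - y₁⟫) hρ.le)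
    nlinarith [hstep, hX, hd4, abs_nonneg ⟪vv y₁, y₂ - y₁⟫, hρ]
  -- the slope Lipschitz estimate
  have hplip : ∀ y₁, Wp y₁ → ∀ y₂, Wp y₂ →
      ‖pp y₁ - pp y₂‖ ≤ (7/ρ)*‖proj y₁ - proj y₂‖ := by
    intro y₁ h₁ y₂ h₂
    have ha1 := hlow y₁ h₁
    have ha2 := hlow y₂ h₂
    have ha1pos : (0:ℝ) < ⟪vv y₁, e⟫ := by linarith
    have ha2pos : (0:ℝ) < ⟪vv y₂, e⟫ := by linarith
    obtain ⟨hn1, _, _, _⟩ := hvv y₁ h₁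
    obtain ⟨hn2, _, _, _⟩ := hvv y₂ h₂
    have c2 : ∀ y, ι (pp y) = e - (⟪vv y, e⟫)⁻¹ • vv y → True := fun _ _ => trivial
    have c2' : ∀ y, 0 < ⟪vv y, e⟫ → ι (pp y) = e - (⟪vv y, e⟫)⁻¹ • vv y := by
      intro y hy
      rw [hppdef]
      dsimp only
      rw [ι_smul, ι_proj, smul_sub, smul_smul,
        show -(⟪vv y,e⟫)⁻¹ * ⟪vv y,e⟫ = -1 from by
          rw [neg_mul, inv_mul_cancel₀ (ne_of_gt hy)]]
      module
    have hι2 : ‖pp y₁ - pp y₂‖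
        = ‖(⟪vv y₂,e⟫)⁻¹ • vv y₂ - (⟪vv y₁,e⟫)⁻¹ • vv y₁‖ := by
      rw [← ι_norm, ← ι_sub, c2' y₁ ha1pos, c2' y₂ ha2pos,
        show (e - (⟪vv y₁,e⟫)⁻¹ • vv y₁) - (e - (⟪vv y₂,e⟫)⁻¹ • vv y₂)
          = (⟪vv y₂,e⟫)⁻¹ • vv y₂ - (⟪vv y₁,e⟫)⁻¹ • vv y₁ from by module]
    have hsplit2 : (⟪vv y₂,e⟫)⁻¹ • vv y₂ - (⟪vv y₁,e⟫)⁻¹ • vv y₁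
        = (⟪vv y₁,e⟫)⁻¹ • (vv y₂ - vv y₁)
          + ((⟪vv y₂,e⟫)⁻¹ - (⟪vv y₁,e⟫)⁻¹) • vv y₂ := by
      module
    have hinv1 : (⟪vv y₁, e⟫)⁻¹ ≤ 4/3 := by
      rw [show (4:ℝ)/3 = (3/4)⁻¹ by norm_num]
      exact inv_anti₀ (by norm_num) ha1
    have hinv2 : (⟪vv y₂, e⟫)⁻¹ ≤ 4/3 := by
      rw [show (4:ℝ)/3 = (3/4)⁻¹ by norm_num]
      exact inv_anti₀ (by norm_num) ha2
    have hbound : ‖pp y₁ - pp y₂‖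
        ≤ (4/3)*‖vv y₂ - vv y₁‖ + |(⟪vv y₂,e⟫)⁻¹ - (⟪vv y₁,e⟫)⁻¹| := by
      rw [hι2, hsplit2]
      have t1 := norm_add_le ((⟪vv y₁,e⟫)⁻¹ • (vv y₂ - vv y₁))
        (((⟪vv y₂,e⟫)⁻¹ - (⟪vv y₁,e⟫)⁻¹) • vv y₂)
      have t2 : ‖(⟪vv y₁,e⟫)⁻¹ • (vv y₂ - vv y₁)‖
          = (⟪vv y₁,e⟫)⁻¹ * ‖vv y₂ - vv y₁‖ := by
        rw [norm_smul, Real.norm_eq_abs, abs_of_pos (inv_pos.2 ha1pos)]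
      have t3 : ‖((⟪vv y₂,e⟫)⁻¹ - (⟪vv y₁,e⟫)⁻¹) • vv y₂‖
          = |(⟪vv y₂,e⟫)⁻¹ - (⟪vv y₁,e⟫)⁻¹| := by
        rw [norm_smul, Real.norm_eq_abs, hn2, mul_one]
      have t4 : (⟪vv y₁,e⟫)⁻¹ * ‖vv y₂ - vv y₁‖ ≤ (4/3)*‖vv y₂ - vv y₁‖ :=
        mul_le_mul_of_nonneg_right hinv1 (norm_nonneg _)
      rw [t2, t3] at t1
      linarith
    have hdiff : |(⟪vv y₂,e⟫)⁻¹ - (⟪vv y₁,e⟫)⁻¹| ≤ (16/9)*‖vv y₂ - vv y₁‖ := by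
      have hid : (⟪vv y₂,e⟫)⁻¹ - (⟪vv y₁,e⟫)⁻¹
          = (⟪vv y₁,e⟫ - ⟪vv y₂,e⟫) * ((⟪vv y₁,e⟫)⁻¹ * (⟪vv y₂,e⟫)⁻¹) := by
        linear_combination (-(⟪vv y₂,e⟫)⁻¹) * (mul_inv_cancel₀ (ne_of_gt ha1pos))
          + ((⟪vv y₁,e⟫)⁻¹) * (mul_inv_cancel₀ (ne_of_gt ha2pos))
      rw [hid, abs_mul]
      have hb1 : |⟪vv y₁,e⟫ - ⟪vv y₂,e⟫| ≤ ‖vv y₂ - vv y₁‖ := by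
        rw [← inner_sub_left]
        have hb := abs_real_inner_le_norm (vv y₁ - vv y₂) e
        rw [he, mul_one] at hb
        rw [norm_sub_rev (vv y₂) (vv y₁)]
        exact hb
      have hb2 : |(⟪vv y₁,e⟫)⁻¹ * (⟪vv y₂,e⟫)⁻¹| ≤ 16/9 := by
        rw [abs_mul, abs_of_pos (inv_pos.2 ha1pos), abs_of_pos (inv_pos.2 ha2pos)]
        nlinarith [hinv1, hinv2, (inv_pos.2 ha1pos).le, (inv_pos.2 ha2pos).le]
      calc |⟪vv y₁,e⟫ - ⟪vv y₂,e⟫| * |(⟪vv y₁,e⟫)⁻¹ * (⟪vv y₂,e⟫)⁻¹|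
          ≤ ‖vv y₂ - vv y₁‖ * (16/9) :=
            mul_le_mul hb1 hb2 (abs_nonneg _) (norm_nonneg _)
        _ = (16/9)*‖vv y₂ - vv y₁‖ := by ring
    have hv := pairV y₁ h₁ y₂ h₂
    have hd := (hgraph y₂ h₂ y₁ h₁).2
    have hvrev : ‖vv y₂ - vv y₁‖ = ‖vv y₁ - vv y₂‖ := norm_sub_rev _ _
    rw [show (7/ρ)*‖proj y₁ - proj y₂‖ = 7*‖proj y₁ - proj y₂‖/ρ by ring, le_div_iff₀ hρ]
    have hb2 : ‖pp y₁ - pp y₂‖ ≤ (28/9)*‖vv y₁ - vv y₂‖ := by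
      rw [← hvrev]
      linarith [hbound, hdiff]
    have hb3 := mul_le_mul_of_nonneg_right hb2 hρ.le
    nlinarith [hb3, hv, hd, norm_nonneg (vv y₁ - vv y₂), hρ]
  -- choose preimages for points of the projected set
  have hpre : ∀ x : EuclideanSpace ℝ (Fin n),
      ∃ y : EuclideanSpace ℝ (Fin (n+1)), x ∈ proj '' (setOf Wp) → (Wp y ∧ proj y = x) := by
    intro x
    by_cases hx : x ∈ proj '' (setOf Wp)
    · obtain ⟨y, hy, hyx⟩ := hx
      exact ⟨y, fun _ => ⟨hy, hyx⟩⟩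
    · exact ⟨y₀, fun h => absurd h hx⟩
  choose yc hyc using hpre
  have hDne : (proj '' setOf Wp).Nonempty := ⟨proj y₀, Set.mem_image_of_mem _ hy₀⟩
  have hfD : ∀ x ∈ proj '' setOf Wp, ∀ z ∈ proj '' setOf Wp,
      |(fun x => ⟪yc x, e⟫) z - (fun x => ⟪yc x, e⟫) x
        - ⟪(fun x => pp (yc x)) x, z - x⟫| ≤ (3/ρ) * ‖z - x‖^2 := by
    intro x hx z hz
    have h1 := hyc x hx
    have h2 := hyc z hz
    have h3 := hwhit (yc x) h1.1 (yc z) h2.1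
    rw [h1.2, h2.2] at h3
    exact h3
  have hpD : ∀ x ∈ proj '' setOf Wp, ∀ z ∈ proj '' setOf Wp,
      ‖(fun x => pp (yc x)) x - (fun x => pp (yc x)) z‖ ≤ (7/ρ) * ‖x - z‖ := by
    intro x hx z hz
    have h1 := hyc x hx
    have h2 := hyc z hz
    have h3 := hplip (yc x) h1.1 (yc z) h2.1
    rw [h1.2, h2.2] at h3
    exact h3
  obtain ⟨w, P, Λ, hΛ, hwD, hw2⟩ := exists_c11_ext (proj '' setOf Wp) hDne
    (fun x => ⟪yc x, e⟫) (fun x => pp (yc x)) (3/ρ) (7/ρ)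
    (by positivity) (by positivity) hfD hpD
  obtain ⟨hderiv, hPlip⟩ := deriv_of_parab w P Λ hΛ hw2
  let ιL : EuclideanSpace ℝ (Fin n) →L[ℝ] EuclideanSpace ℝ (Fin (n+1)) :=
    (Submodule.subtypeL _).comp (eqv.toLinearIsometry.toContinuousLinearMap)
  have hιL : ∀ v, ιL v = ι v := fun v => rfl
  have hFd : ∀ x, HasFDerivAt (fun x => ιL x + w x • e)
      (ιL + (((InnerProductSpace.toDualMap ℝ (EuclideanSpace ℝ (Fin n))) (P x)
        : EuclideanSpace ℝ (Fin n) →L[ℝ] ℝ)).smulRight e) x := by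
    intro x
    exact (ιL.hasFDerivAt).add ((hderiv x).smul_const e)
  refine ⟨fun x => ιL x + w x • e, ⟨fun x => (hFd x).differentiableAt, ?_⟩, ?_⟩
  · refine ⟨Real.toNNReal (6*Λ), LipschitzWith.of_dist_le_mul ?_⟩
    intro x y
    rw [(hFd x).fderiv, (hFd y).fderiv, dist_eq_norm]
    have hsub : (ιL + (((InnerProductSpace.toDualMap ℝ (EuclideanSpace ℝ (Fin n))) (P x)
          : EuclideanSpace ℝ (Fin n) →L[ℝ] ℝ)).smulRight e)
        - (ιL + (((InnerProductSpace.toDualMap ℝ (EuclideanSpace ℝ (Fin n))) (P y)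
          : EuclideanSpace ℝ (Fin n) →L[ℝ] ℝ)).smulRight e)
        = ((((InnerProductSpace.toDualMap ℝ (EuclideanSpace ℝ (Fin n))) (P x - P y)
          : EuclideanSpace ℝ (Fin n) →L[ℝ] ℝ))).smulRight e := by
      refine ContinuousLinearMap.ext fun v => ?_
      simp only [ContinuousLinearMap.sub_apply, ContinuousLinearMap.add_apply,
        ContinuousLinearMap.smulRight_apply, InnerProductSpace.toDualMap_apply_apply,
        inner_sub_left, sub_smul]
      abel
    rw [hsub, ContinuousLinearMap.norm_smulRight_apply, he, mul_one]
    have hn := (InnerProductSpace.toDualMap ℝ (EuclideanSpace ℝ (Fin n))).norm_map (P x - P y)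
    rw [hn]
    calc ‖P x - P y‖ ≤ 6*Λ*‖x - y‖ := hPlip x y
      _ = (Real.toNNReal (6*Λ) : ℝ) * dist x y := by
          rw [dist_eq_norm, Real.coe_toNNReal _ (by positivity)]
  · intro y hy hball
    have hWy : Wp y := ⟨hy, hball⟩
    have hxD : proj y ∈ proj '' setOf Wp := Set.mem_image_of_mem _ hWy
    have h1 := hyc (proj y) hxD
    have hycy : yc (proj y) = y := by
      have h2 := (hgraph y hWy (yc (proj y)) h1.1).2
      rw [h1.2, sub_self, norm_zero] at h2
      have h3 : ‖yc (proj y) - y‖ ≤ 0 := by linarith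
      have h4 := norm_le_zero_iff.1 h3
      exact sub_eq_zero.1 h4
    refine ⟨proj y, ?_⟩
    show ιL (proj y) + w (proj y) • e = y
    rw [hιL, hwD (proj y) hxD]
    rw [hycy, ι_proj]
    abel

end C11

open C11

set_option maxHeartbeats 1000000

/-- `Γ_s^+ = ⋃_{t>s} Γ_s^t` can be covered by countably many `C^{1,1}`-images of
`ℝⁿ` in `ℝ^{n+1}`: there are maps `f_j : ℝⁿ → ℝ^{n+1}`, differentiable with
Lipschitz derivative, whose ranges cover `Γ_s^+`. -/
theorem stmt_12 (n : ℕ) (hn : 1 ≤ n)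
    (Ω : Set (EuclideanSpace ℝ (Fin (n + 1))))
    (hΩopen : IsOpen Ω) (hΩne : Ω.Nonempty) (hfr : (frontier Ω).Nonempty)
    (u : EuclideanSpace ℝ (Fin (n + 1)) → ℝ)
    (hu : ∀ y, u y = Metric.infDist y (frontier Ω))
    (s : ℝ) (hs : 0 < s) :
    ∃ f : ℕ → EuclideanSpace ℝ (Fin n) → EuclideanSpace ℝ (Fin (n + 1)),
      (∀ j, Differentiable ℝ (f j) ∧ ∃ K : NNReal, LipschitzWith K (fderiv ℝ (f j))) ∧
      {y | ∃ t, s < t ∧ ∃ x z, x ∈ frontier Ω ∧ z ∈ Ω ∧ u z = t ∧ ‖x - z‖ = t ∧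
        y = x + (s / t) • (z - x)} ⊆ ⋃ j, Set.range (f j) := by
  classical
  haveI : TopologicalSpace.SeparableSpace (EuclideanSpace ℝ (Fin (n+1))) := by
    set_option synthInstance.maxHeartbeats 1000000 in infer_instance
  obtain ⟨T, hTc, hTd⟩ :=
    TopologicalSpace.exists_countable_dense (EuclideanSpace ℝ (Fin (n+1)))
  haveI : Countable ↥T := hTc.to_subtype
  haveI : Nonempty ↥T := (hTd.nonempty).to_subtype
  have key : ∀ (c q : EuclideanSpace ℝ (Fin (n+1))) (k : ℕ),
      ∃ F : EuclideanSpace ℝ (Fin n) → EuclideanSpace ℝ (Fin (n+1)),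
        (Differentiable ℝ F ∧ ∃ Knn : NNReal, LipschitzWith Knn (fderiv ℝ F)) ∧
        (c ≠ 0 → ∀ y, (u y = s ∧ ∃ v, ‖v‖ = 1 ∧ ‖v - ‖c‖⁻¹ • c‖ ≤ 1/4 ∧
            Metric.ball (y + (min s (1/((k:ℝ)+1)))•v) (min s (1/((k:ℝ)+1))) ⊆ {w | s < u w} ∧
            Metric.ball (y - (min s (1/((k:ℝ)+1)))•v) (min s (1/((k:ℝ)+1))) ⊆ {w | u w < s}) →
          y ∈ Metric.ball q ((min s (1/((k:ℝ)+1)))/4) → y ∈ Set.range F) := by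
    intro c q k
    by_cases hc : c = 0
    · refine ⟨fun _ => 0, ⟨differentiable_const _, 0, ?_⟩, fun hne => absurd hc hne⟩
      have hfd : (fderiv ℝ (fun _ : EuclideanSpace ℝ (Fin n)
          => (0:EuclideanSpace ℝ (Fin (n+1))))) = fun _ => 0 := by
        ext1 x
        simp [fderiv_const]
      rw [hfd]
      exact LipschitzWith.const' 0
    · have hρpos : 0 < min s (1/((k:ℝ)+1)) := lt_min hs (by positivity)
      have hcn : ‖(‖c‖⁻¹ • c : EuclideanSpace ℝ (Fin (n+1)))‖ = 1 := by
        rw [norm_smul, Real.norm_eq_abs, abs_of_nonneg (inv_nonneg.2 (norm_nonneg c)),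
          inv_mul_cancel₀ (norm_ne_zero_iff.2 hc)]
      obtain ⟨F, hF1, hF2⟩ := window_map n u s (min s (1/((k:ℝ)+1))) hρpos (‖c‖⁻¹ • c) q hcn
      exact ⟨F, hF1, fun _ => hF2⟩
  choose FF hFF1 hFF2 using key
  obtain ⟨σ, hσ⟩ := exists_surjective_nat (↥T × ↥T × ℕ)
  refine ⟨fun j => FF ((σ j).1 : EuclideanSpace ℝ (Fin (n+1)))
    ((σ j).2.1 : EuclideanSpace ℝ (Fin (n+1))) (σ j).2.2, fun j => hFF1 _ _ _, ?_⟩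
  intro y hy
  obtain ⟨t, hts, x, z, hxf, hzΩ, huz, hxz, hyeq⟩ := hy
  have htpos : 0 < t := lt_trans hs hts
  have htne : t ≠ 0 := ne_of_gt htpos
  -- u is 1-Lipschitz
  have hulip : ∀ a b : EuclideanSpace ℝ (Fin (n+1)), u a ≤ u b + ‖a - b‖ := by
    intro a b
    have h1 := (Metric.lipschitz_infDist_pt (frontier Ω)).dist_le_mul a b
    rw [Real.dist_eq] at h1
    have h2 := (abs_le.1 h1).2
    rw [hu a, hu b]
    have h3 : dist a b = ‖a - b‖ := dist_eq_norm _ _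
    simp only [NNReal.coe_one, one_mul] at h2
    linarith
  obtain ⟨v, hvdef⟩ : ∃ v : EuclideanSpace ℝ (Fin (n+1)), v = t⁻¹ • (z - x) := ⟨_, rfl⟩
  have hnormc : ∀ r : ℝ, ‖r • (z - x)‖ = |r| * t := by
    intro r
    rw [norm_smul, Real.norm_eq_abs, norm_sub_rev, hxz]
  have hvnorm : ‖v‖ = 1 := by
    rw [hvdef, hnormc, abs_of_nonneg (inv_nonneg.2 htpos.le), inv_mul_cancel₀ htne]
  -- distances
  have hyx : ‖y - x‖ = s := by
    have hid : y - x = (s/t) • (z - x) := by rw [hyeq]; abel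
    rw [hid, hnormc, abs_of_nonneg (div_nonneg hs.le htpos.le), div_mul_cancel₀ _ htne]
  have hyz : ‖y - z‖ = t - s := by
    have hid : y - z = (s/t - 1) • (z - x) := by rw [hyeq]; module
    rw [hid, hnormc, abs_of_nonpos (by
      rw [sub_nonpos, div_le_one htpos]
      linarith)]
    field_simp
    ring
  have huy : u y = s := by
    have h1 : u y ≤ s := by
      rw [hu y]
      calc Metric.infDist y (frontier Ω) ≤ dist y x := Metric.infDist_le_dist_of_mem hxf
        _ = s := by rw [dist_eq_norm, hyx]
    have h2 := hulip z y
    rw [show z - y = -(y - z) by abel, norm_neg, hyz, huz] at h2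
    linarith
  -- choose k
  obtain ⟨k, hk⟩ := exists_nat_one_div_lt (show (0:ℝ) < t - s by linarith)
  obtain ⟨ρ, hρdef⟩ : ∃ ρ : ℝ, ρ = min s (1/((k:ℝ)+1)) := ⟨_, rfl⟩
  have hρpos : 0 < ρ := by rw [hρdef]; exact lt_min hs (by positivity)
  have hρs : ρ ≤ s := by rw [hρdef]; exact min_le_left _ _
  have hρts : ρ ≤ t - s := by
    rw [hρdef]
    exact le_trans (min_le_right _ _) hk.le
  -- the two balls
  have hballp : Metric.ball (y + ρ•v) ρ ⊆ {w | s < u w} := by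
    intro w hw
    have hd1 : ‖w - (y + ρ•v)‖ < ρ := by
      rw [← dist_eq_norm]
      exact Metric.mem_ball.1 hw
    have hid : y + ρ•v - z = ((s+ρ)/t - 1) • (z - x) := by rw [hyeq, hvdef]; module
    have hn1 : ‖y + ρ•v - z‖ = t - s - ρ := by
      rw [hid, hnormc, abs_of_nonpos (by
        rw [sub_nonpos, div_le_one htpos]
        linarith)]
      field_simp
      ring
    have htri : ‖w - z‖ ≤ ‖w - (y + ρ•v)‖ + ‖y + ρ•v - z‖ := by
      have h0 : w - z = (w - (y + ρ•v)) + (y + ρ•v - z) := by abel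
      rw [h0]
      exact norm_add_le _ _
    have h2 := hulip z w
    rw [show z - w = -(w - z) by abel, norm_neg, huz] at h2
    have : ‖w - z‖ < t - s := by linarith
    show s < u w
    linarith
  have hballm : Metric.ball (y - ρ•v) ρ ⊆ {w | u w < s} := by
    intro w hw
    have hd1 : ‖w - (y - ρ•v)‖ < ρ := by
      rw [← dist_eq_norm]
      exact Metric.mem_ball.1 hw
    have hid : y - ρ•v - x = ((s-ρ)/t) • (z - x) := by rw [hyeq, hvdef]; module
    have hn1 : ‖y - ρ•v - x‖ = s - ρ := by
      rw [hid, hnormc, abs_of_nonneg (div_nonneg (by linarith) htpos.le),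
        div_mul_cancel₀ _ htne]
    have htri : ‖w - x‖ ≤ ‖w - (y - ρ•v)‖ + ‖y - ρ•v - x‖ := by
      have h0 : w - x = (w - (y - ρ•v)) + (y - ρ•v - x) := by abel
      rw [h0]
      exact norm_add_le _ _
    have h2 : u w ≤ ‖w - x‖ := by
      rw [hu w]
      calc Metric.infDist w (frontier Ω) ≤ dist w x := Metric.infDist_le_dist_of_mem hxf
        _ = ‖w - x‖ := dist_eq_norm _ _
    show u w < s
    linarith
  -- choose the direction approximation c and the center q
  obtain ⟨c, hcT, hcd⟩ := hTd.exists_dist_lt v (show (0:ℝ) < 1/8 by norm_num)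
  have hvc : ‖v - c‖ < 1/8 := by rw [← dist_eq_norm]; exact hcd
  have hcnorm : 7/8 < ‖c‖ := by
    have h1 := abs_norm_sub_norm_le v c
    rw [hvnorm] at h1
    have h2 := (abs_le.1 h1).2
    linarith
  have hcne : c ≠ 0 := by
    intro h0
    rw [h0, norm_zero] at hcnorm
    norm_num at hcnorm
  have hcnz : ‖c‖ ≠ 0 := norm_ne_zero_iff.2 hcne
  have hve : ‖v - ‖c‖⁻¹ • c‖ ≤ 1/4 := by
    have hce : ‖c - ‖c‖⁻¹ • c‖ = |‖c‖ - 1| := by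
      have hid : c - ‖c‖⁻¹ • c = (1 - ‖c‖⁻¹) • c := by module
      have h1 : |1 - ‖c‖⁻¹| * ‖c‖ = |(1 - ‖c‖⁻¹) * ‖c‖| := by
        rw [abs_mul, abs_of_nonneg (norm_nonneg c)]
      have h2 : (1 - ‖c‖⁻¹) * ‖c‖ = ‖c‖ - 1 := by field_simp
      rw [hid, norm_smul, Real.norm_eq_abs, h1, h2]
    have htr : ‖v - ‖c‖⁻¹ • c‖ ≤ ‖v - c‖ + ‖c - ‖c‖⁻¹ • c‖ := by
      have h0 : v - ‖c‖⁻¹ • c = (v - c) + (c - ‖c‖⁻¹ • c) := by abel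
      rw [h0]
      exact norm_add_le _ _
    have habs : |‖c‖ - 1| ≤ ‖v - c‖ := by
      have h1 := abs_norm_sub_norm_le c v
      rw [hvnorm, norm_sub_rev] at h1
      exact h1
    rw [hce] at htr
    linarith
  obtain ⟨q, hqT, hqd⟩ := hTd.exists_dist_lt y (show (0:ℝ) < ρ/4 by positivity)
  have hyball : y ∈ Metric.ball q (ρ/4) := Metric.mem_ball.2 hqd
  rw [hρdef] at hballp hballm hyball
  rw [Set.mem_iUnion]
  obtain ⟨j, hj⟩ := hσ ⟨⟨c, hcT⟩, ⟨q, hqT⟩, k⟩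
  refine ⟨j, ?_⟩
  dsimp only
  rw [hj]
  exact hFF2 c q k hcne y ⟨huy, v, hvnorm, hve, hballp, hballm⟩ hyball
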